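/- For any positive integers K and F, writing K = (m−1)F + κ with m ≥ 1 and 0 < κ ≤ F, we have S(K, F, 1) = m·C(F,2) − C(F−κ,2), i.e., the minimum S of a (K,F,1,S) PDA equals m·F(F−1)/2 − (F−κ)(F−κ−1)/2. -/

import Mathlib

/-- A `(K, F, Z, S)` placement delivery array: an `F × K` array over `[0,S) ∪ {*}`
(star encoded as `none`) such that each column contains exactly `Z` stars, every
integer in `[0,S)` appears, and any two equal integer entries lie in distinct rows
and distinct columns with stars at the two crossing positions. -/
def IsPDA (K F Z S : ℕ) (P : Fin F → Fin K → Option ℕ) : Prop :=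
  (∀ j, (Finset.univ.filter fun i => P i j = none).card = Z) ∧
  (∀ i j s, P i j = some s → s < S) ∧
  (∀ s, s < S → ∃ i j, P i j = some s) ∧
  (∀ i₁ j₁ i₂ j₂ s, P i₁ j₁ = some s → P i₂ j₂ = some s → (i₁ ≠ i₂ ∨ j₁ ≠ j₂) →
    i₁ ≠ i₂ ∧ j₁ ≠ j₂ ∧ P i₁ j₂ = none ∧ P i₂ j₁ = none)

def gsum (F d : ℕ) : ℕ := ∑ t ∈ Finset.range d, (F - 1 - t)

lemma gsum_succ (F d : ℕ) : gsum F (d+1) = gsum F d + (F - 1 - d) :=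
  Finset.sum_range_succ _ _

lemma gsum_mono (F : ℕ) {d e : ℕ} (h : d ≤ e) : gsum F d ≤ gsum F e :=
  Finset.sum_le_sum_of_subset (Finset.range_subset_range.mpr h)

lemma two_mul_choose_two (n : ℕ) : 2 * n.choose 2 = n * (n-1) := by
  induction n with
  | zero => simp
  | succ k ih =>
    rw [Nat.choose_succ_succ, Nat.choose_one_right, Nat.mul_add, ih]
    cases k with
    | zero => rfl
    | succ j => simp [Nat.succ_sub_one]; ring

lemma gsum_tail (F d : ℕ) (h : d ≤ F) : gsum F d + (F - d).choose 2 = F.choose 2 := by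
  induction d with
  | zero => simp [gsum]
  | succ e ih =>
    have he : e ≤ F := le_of_lt (Nat.lt_of_lt_of_le (Nat.lt_succ_self e) h)
    have ihe := ih he
    rw [gsum_succ]
    have h1 : 2 * (F - e).choose 2 = (F-e) * (F-e-1) := two_mul_choose_two _
    have h2 : 2 * (F - (e+1)).choose 2 = (F-(e+1)) * (F-(e+1)-1) := two_mul_choose_two _
    -- (F-e).choose 2 = (F-(e+1)).choose 2 + (F-1-e)
    have key : (F - e) * (F - e - 1) = (F - (e+1)) * (F - (e+1) - 1) + 2 * (F - 1 - e) := by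
      have h3 : F - e = (F - (e+1)) + 1 := by omega
      have h4 : F - 1 - e = F - (e+1) := by omega
      rw [h3, h4]
      cases (F - (e+1)) with
      | zero => rfl
      | succ b => simp [Nat.succ_sub_one]; ring
    omega

lemma gsum_all (F : ℕ) : gsum F F = F.choose 2 := by
  have := gsum_tail F F le_rfl
  simpa using this

def idx (F a b : ℕ) : ℕ := gsum F a + (b - a - 1)

lemma idx_lt_succ (F a b : ℕ) (hab : a < b) (hbF : b < F) :
    idx F a b < gsum F (a+1) := by
  rw [gsum_succ]
  have : b - a - 1 < F - 1 - a := by omega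
  simpa [idx] using this

lemma idx_lt (F a b d : ℕ) (hab : a < b) (hbF : b < F) (had : a < d) :
    idx F a b < gsum F d :=
  lt_of_lt_of_le (idx_lt_succ F a b hab hbF) (gsum_mono F had)

lemma idx_inj (F : ℕ) {a b a' b' : ℕ} (hab : a < b) (hbF : b < F)
    (hab' : a' < b') (hbF' : b' < F) (h : idx F a b = idx F a' b') :
    a = a' ∧ b = b' := by
  have haa : a = a' := by
    rcases lt_trichotomy a a' with hlt | heq | hgt
    · exfalso
      have h1 := idx_lt F a b (a') hab hbF hlt
      have h2 : gsum F a' ≤ idx F a' b' := Nat.le_add_right _ _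
      omega
    · exact heq
    · exfalso
      have h1 := idx_lt F a' b' a hab' hbF' hgt
      have h2 : gsum F a ≤ idx F a b := Nat.le_add_right _ _
      omega
  subst haa
  have : b - a - 1 = b' - a - 1 := by simpa [idx] using h
  exact ⟨rfl, by omega⟩

lemma idx_decode (F : ℕ) : ∀ d n, d ≤ F → n < gsum F d →
    ∃ a b, a < d ∧ a < b ∧ b < F ∧ idx F a b = n := by
  intro d
  induction d with
  | zero => intro n _ h; simp [gsum] at h
  | succ e ih =>
    intro n hd h
    by_cases hne : n < gsum F e
    · obtain ⟨a, b, h1, h2, h3, h4⟩ := ih n (by omega) hne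
      exact ⟨a, b, by omega, h2, h3, h4⟩
    · push_neg at hne
      refine ⟨e, n - gsum F e + e + 1, by omega, by omega, ?_, ?_⟩
      · rw [gsum_succ] at h; omega
      · simp only [idx]
        omega


def pdaP (K F : ℕ) : Fin F → Fin K → Option ℕ :=
  fun i x => if (i : ℕ) = (x : ℕ) % F then none
    else some (((x:ℕ) / F) * gsum F F +
      idx F (min (i:ℕ) ((x:ℕ)%F)) (max (i:ℕ) ((x:ℕ)%F)))

lemma minmax_cases {a b c d : ℕ} (h1 : min a b = min c d) (h2 : max a b = max c d) :
    (a = c ∧ b = d) ∨ (a = d ∧ b = c) := by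
  simp only [min_def, max_def] at h1 h2
  split_ifs at h1 h2 <;> omega

lemma pdaP_isPDA (K F m' κ : ℕ) (hF : 0 < F) (hκ : 0 < κ) (hκF : κ ≤ F)
    (hK : K = m' * F + κ) :
    IsPDA K F 1 (m' * gsum F F + gsum F κ) (pdaP K F) := by
  refine ⟨?_, ?_, ?_, ?_⟩
  · -- each column exactly one star
    intro j
    have : (Finset.univ.filter fun i : Fin F => pdaP K F i j = none)
        = {⟨(j:ℕ) % F, Nat.mod_lt _ hF⟩} := by
      ext i
      simp [pdaP, Fin.ext_iff]
    rw [this, Finset.card_singleton]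
  · -- bounds
    intro i x s hs
    simp only [pdaP] at hs
    split_ifs at hs with hij
    injection hs with hs
    have hlt : (x:ℕ) % F < F := Nat.mod_lt _ hF
    have hab : min (i:ℕ) ((x:ℕ)%F) < max (i:ℕ) ((x:ℕ)%F) := by
      rcases lt_or_gt_of_ne hij with h | h
      · rw [min_eq_left (le_of_lt h), max_eq_right (le_of_lt h)]; exact h
      · rw [min_eq_right (le_of_lt h), max_eq_left (le_of_lt h)]; exact h
    have hbF : max (i:ℕ) ((x:ℕ)%F) < F := max_lt i.isLt hlt
    have hxK : (x:ℕ) < K := x.isLt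
    have hdm := Nat.div_add_mod (x:ℕ) F
    have hcm : F * m' = m' * F := mul_comm _ _
    have hcdiv : (x:ℕ)/F ≤ m' := by
      by_contra hgt
      push_neg at hgt
      have h2 : (m'+1) * F ≤ ((x:ℕ)/F) * F := Nat.mul_le_mul_right _ hgt
      have h3 : ((x:ℕ)/F) * F = F * ((x:ℕ)/F) := mul_comm _ _
      have h4 : (m'+1) * F = m' * F + F := by ring
      omega
    rcases lt_or_eq_of_le hcdiv with hc | hc
    · have h1 : idx F (min (i:ℕ) ((x:ℕ)%F)) (max (i:ℕ) ((x:ℕ)%F)) < gsum F F :=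
        idx_lt F _ _ F hab hbF (by omega)
      have h2 : ((x:ℕ)/F + 1) * gsum F F ≤ m' * gsum F F :=
        Nat.mul_le_mul_right _ (by omega)
      have h3 : ((x:ℕ)/F + 1) * gsum F F = ((x:ℕ)/F) * gsum F F + gsum F F := by ring
      omega
    · rw [hc] at hs
      have hlink : F * ((x:ℕ)/F) = F * m' := by rw [hc]
      have hmod : (x:ℕ) % F < κ := by omega
      have h1 : idx F (min (i:ℕ) ((x:ℕ)%F)) (max (i:ℕ) ((x:ℕ)%F)) < gsum F κ :=
        idx_lt F _ _ κ hab hbF (by omega)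
      omega
  · -- surjectivity
    intro s hsS
    by_cases hbig : s < m' * gsum F F
    · have hC0pos : 0 < gsum F F := by
        rcases Nat.eq_zero_or_pos (gsum F F) with h | h
        · rw [h, Nat.mul_zero] at hbig; omega
        · exact h
      have hdm := Nat.div_add_mod s (gsum F F)
      obtain ⟨a, b, haF, hab, hbF, hidx⟩ :=
        idx_decode F F (s % gsum F F) le_rfl (Nat.mod_lt _ hC0pos)
      have hclt : s / gsum F F < m' := by
        by_contra hge
        push_neg at hge
        have h2 : m' * gsum F F ≤ (s / gsum F F) * gsum F F := Nat.mul_le_mul_right _ hge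
        have h3 : (s / gsum F F) * gsum F F = gsum F F * (s / gsum F F) := mul_comm _ _
        omega
      have hxK : (s / gsum F F) * F + a < K := by
        have h3 : (s / gsum F F + 1) * F ≤ m' * F := Nat.mul_le_mul_right _ hclt
        have h4 : (s / gsum F F + 1) * F = (s / gsum F F) * F + F := by ring
        omega
      refine ⟨⟨b, hbF⟩, ⟨(s / gsum F F) * F + a, hxK⟩, ?_⟩
      have hmod : ((s / gsum F F) * F + a) % F = a := by
        rw [show (s / gsum F F) * F + a = F * (s / gsum F F) + a from by ring,
          Nat.mul_add_mod]
        exact Nat.mod_eq_of_lt haF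
      have hdiv : ((s / gsum F F) * F + a) / F = s / gsum F F := by
        rw [show (s / gsum F F) * F + a = F * (s / gsum F F) + a from by ring,
          Nat.mul_add_div hF, Nat.div_eq_of_lt haF, add_zero]
      simp only [pdaP, hmod, hdiv]
      rw [if_neg (by omega)]
      rw [min_eq_right (le_of_lt hab), max_eq_left (le_of_lt hab)]
      have h5 : (s / gsum F F) * gsum F F = gsum F F * (s / gsum F F) := mul_comm _ _
      exact congrArg some (by omega)
    · push_neg at hbig
      have hnlt : s - m' * gsum F F < gsum F κ := by omega
      obtain ⟨a, b, haκ, hab, hbF, hidx⟩ := idx_decode F κ _ hκF hnlt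
      have haF : a < F := by omega
      have hxK : m' * F + a < K := by omega
      refine ⟨⟨b, hbF⟩, ⟨m' * F + a, hxK⟩, ?_⟩
      have hmod : (m' * F + a) % F = a := by
        rw [show m' * F + a = F * m' + a from by ring, Nat.mul_add_mod]
        exact Nat.mod_eq_of_lt haF
      have hdiv : (m' * F + a) / F = m' := by
        rw [show m' * F + a = F * m' + a from by ring,
          Nat.mul_add_div hF, Nat.div_eq_of_lt haF, add_zero]
      simp only [pdaP, hmod, hdiv]
      rw [if_neg (by omega)]
      rw [min_eq_right (le_of_lt hab), max_eq_left (le_of_lt hab)]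
      exact congrArg some (by omega)
  · -- crossing condition
    intro i₁ x₁ i₂ x₂ s h1 h2 hne
    simp only [pdaP] at h1 h2
    split_ifs at h1 h2 with hij1 hij2
    injection h1 with h1; injection h2 with h2
    have hlt1 : (x₁:ℕ) % F < F := Nat.mod_lt _ hF
    have hlt2 : (x₂:ℕ) % F < F := Nat.mod_lt _ hF
    have hab1 : min (i₁:ℕ) ((x₁:ℕ)%F) < max (i₁:ℕ) ((x₁:ℕ)%F) := by
      rcases lt_or_gt_of_ne hij1 with h | h
      · rw [min_eq_left (le_of_lt h), max_eq_right (le_of_lt h)]; exact h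
      · rw [min_eq_right (le_of_lt h), max_eq_left (le_of_lt h)]; exact h
    have hbF1 : max (i₁:ℕ) ((x₁:ℕ)%F) < F := max_lt i₁.isLt hlt1
    have hab2 : min (i₂:ℕ) ((x₂:ℕ)%F) < max (i₂:ℕ) ((x₂:ℕ)%F) := by
      rcases lt_or_gt_of_ne hij2 with h | h
      · rw [min_eq_left (le_of_lt h), max_eq_right (le_of_lt h)]; exact h
      · rw [min_eq_right (le_of_lt h), max_eq_left (le_of_lt h)]; exact h
    have hbF2 : max (i₂:ℕ) ((x₂:ℕ)%F) < F := max_lt i₂.isLt hlt2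
    have hi1 : idx F (min (i₁:ℕ) ((x₁:ℕ)%F)) (max (i₁:ℕ) ((x₁:ℕ)%F)) < gsum F F :=
      idx_lt F _ _ F hab1 hbF1 (lt_of_le_of_lt (min_le_right _ _) hlt1)
    have hi2 : idx F (min (i₂:ℕ) ((x₂:ℕ)%F)) (max (i₂:ℕ) ((x₂:ℕ)%F)) < gsum F F :=
      idx_lt F _ _ F hab2 hbF2 (lt_of_le_of_lt (min_le_right _ _) hlt2)
    have hC0pos : 0 < gsum F F := lt_of_le_of_lt (Nat.zero_le _) hi1
    have e1 : s / gsum F F = (x₁:ℕ)/F := by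
      rw [← h1,
        show (x₁:ℕ)/F * gsum F F + idx F (min (i₁:ℕ) ((x₁:ℕ)%F)) (max (i₁:ℕ) ((x₁:ℕ)%F))
          = gsum F F * ((x₁:ℕ)/F) + idx F (min (i₁:ℕ) ((x₁:ℕ)%F)) (max (i₁:ℕ) ((x₁:ℕ)%F))
          from by ring,
        Nat.mul_add_div hC0pos, Nat.div_eq_of_lt hi1, add_zero]
    have e2 : s / gsum F F = (x₂:ℕ)/F := by
      rw [← h2,
        show (x₂:ℕ)/F * gsum F F + idx F (min (i₂:ℕ) ((x₂:ℕ)%F)) (max (i₂:ℕ) ((x₂:ℕ)%F))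
          = gsum F F * ((x₂:ℕ)/F) + idx F (min (i₂:ℕ) ((x₂:ℕ)%F)) (max (i₂:ℕ) ((x₂:ℕ)%F))
          from by ring,
        Nat.mul_add_div hC0pos, Nat.div_eq_of_lt hi2, add_zero]
    have hceq : (x₁:ℕ)/F = (x₂:ℕ)/F := e1 ▸ e2
    have hidxeq : idx F (min (i₁:ℕ) ((x₁:ℕ)%F)) (max (i₁:ℕ) ((x₁:ℕ)%F))
        = idx F (min (i₂:ℕ) ((x₂:ℕ)%F)) (max (i₂:ℕ) ((x₂:ℕ)%F)) := by
      have hmm : (x₁:ℕ)/F * gsum F F = (x₂:ℕ)/F * gsum F F := by rw [hceq]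
      omega
    obtain ⟨hmineq, hmaxeq⟩ := idx_inj F hab1 hbF1 hab2 hbF2 hidxeq
    rcases minmax_cases hmineq hmaxeq with ⟨hii, hJJ⟩ | ⟨hiJ, hJi⟩
    · exfalso
      have hxeq : (x₁:ℕ) = (x₂:ℕ) := by
        have d1 := Nat.div_add_mod (x₁:ℕ) F
        have d2 := Nat.div_add_mod (x₂:ℕ) F
        have : F * ((x₁:ℕ)/F) = F * ((x₂:ℕ)/F) := by rw [hceq]
        omega
      rcases hne with h | h
      · exact h (Fin.ext hii)
      · exact h (Fin.ext hxeq)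
    · have hine : (i₁:ℕ) ≠ (i₂:ℕ) := by omega
      have hJne : (x₁:ℕ)%F ≠ (x₂:ℕ)%F := by omega
      refine ⟨fun h => hine (congrArg Fin.val h), ?_, ?_, ?_⟩
      · intro h
        exact hJne (by rw [h])
      · simp only [pdaP]
        rw [if_pos hiJ]
      · simp only [pdaP]
        rw [if_pos (hJi.symm)]

lemma fold_lemma (F : ℕ) (n : ℕ → ℕ) (hn : ∀ t, n t ≤ F) (M : ℕ) :
    ∃ v, v ≤ F ∧ (∑ t ∈ Finset.range M, n t) % F = v % F ∧
      v * (F - v) ≤ ∑ t ∈ Finset.range M, n t * (F - n t) := by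
  induction M with
  | zero => exact ⟨0, Nat.zero_le _, by simp, by simp⟩
  | succ M ih =>
    obtain ⟨v, hvF, hmod, hineq⟩ := ih
    rw [Finset.sum_range_succ, Finset.sum_range_succ (fun t => n t * (F - n t))]
    set x := n M with hx
    have hxF : x ≤ F := hn M
    by_cases hcase : x + v ≤ F
    · refine ⟨x + v, hcase, ?_, ?_⟩
      · have h1 : (∑ t ∈ Finset.range M, n t) + x ≡ v + x [MOD F] :=
          Nat.ModEq.add_right x hmod
        calc ((∑ t ∈ Finset.range M, n t) + x) % F = (v + x) % F := h1
        _ = (x + v) % F := by rw [Nat.add_comm]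
      · have key : (x+v)*(F-(x+v)) + 2*(x*v) = x*(F-x) + v*(F-v) := by
          zify [hxF, hvF, hcase]
          ring
        omega
    · push_neg at hcase
      refine ⟨x + v - F, by omega, ?_, ?_⟩
      · have h1 : (∑ t ∈ Finset.range M, n t) + x ≡ v + x [MOD F] :=
          Nat.ModEq.add_right x hmod
        calc ((∑ t ∈ Finset.range M, n t) + x) % F = (v + x) % F := h1
        _ = ((x + v - F) + F) % F := by rw [Nat.add_comm v x]; congr 1; omega
        _ = (x + v - F) % F := Nat.add_mod_right _ _
      · have hsub : x + v - F ≤ F := by omega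
        have hFle : F ≤ x + v := le_of_lt hcase
        have key : (x+v-F)*(F-(x+v-F)) + 2*((F-x)*(F-v)) = x*(F-x) + v*(F-v) := by
          zify [hxF, hvF, hsub, hFle]
          ring
        omega

lemma minsum_bound (F m' κ : ℕ) (hF : 0 < F) (hκ : 0 < κ) (hκF : κ ≤ F)
    (c : Fin F → ℕ) (hsum : ∑ r, c r = m' * F + κ) :
    ∑ r : Fin F, ∑ r' : Fin F, (if r = r' then 0 else min (c r) (c r'))
      ≤ m' * F * (F-1) + κ * (κ-1) := by
  set M := m' * F + κ with hM
  have hcM : ∀ r, c r ≤ M := by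
    intro r
    rw [← hsum]
    exact Finset.single_le_sum (fun _ _ => Nat.zero_le _) (Finset.mem_univ r)
  set n : ℕ → ℕ := fun t => (Finset.univ.filter (fun r : Fin F => t < c r)).card with hn
  have hnF : ∀ t, n t ≤ F := by
    intro t
    calc n t ≤ Finset.univ.card := Finset.card_filter_le _ _
    _ = F := by simp
  -- min as indicator sum
  have hmin : ∀ a b : ℕ, a ≤ M → b ≤ M →
      min a b = ∑ t ∈ Finset.range M, (if t < a ∧ t < b then 1 else 0) := by
    intro a b ha hb
    rw [← Finset.card_filter]
    have : (Finset.range M).filter (fun t => t < a ∧ t < b) = Finset.range (min a b) := by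
      ext t
      simp only [Finset.mem_filter, Finset.mem_range, lt_min_iff]
      constructor
      · rintro ⟨_, h⟩; exact h
      · intro h; exact ⟨lt_of_lt_of_le h.1 ha, h⟩
    rw [this, Finset.card_range]
  -- n t as indicator sum
  have hnt : ∀ t, n t = ∑ r : Fin F, (if t < c r then 1 else 0) := by
    intro t
    rw [hn]
    exact Finset.card_filter _ _
  -- swap: full double sum of mins equals sum of squares
  have hswap : ∑ r : Fin F, ∑ r' : Fin F, min (c r) (c r')
      = ∑ t ∈ Finset.range M, n t * n t := by
    have step1 : ∑ r : Fin F, ∑ r' : Fin F, min (c r) (c r')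
        = ∑ r : Fin F, ∑ r' : Fin F, ∑ t ∈ Finset.range M,
            (if t < c r then 1 else 0) * (if t < c r' then 1 else 0) := by
      refine Finset.sum_congr rfl fun r _ => Finset.sum_congr rfl fun r' _ => ?_
      rw [hmin _ _ (hcM r) (hcM r')]
      refine Finset.sum_congr rfl fun t _ => ?_
      by_cases h1 : t < c r <;> by_cases h2 : t < c r' <;> simp [h1, h2]
    rw [step1]
    have step2 : ∀ r : Fin F, ∑ r' : Fin F, ∑ t ∈ Finset.range M,
        (if t < c r then 1 else 0) * (if t < c r' then 1 else 0)
        = ∑ t ∈ Finset.range M, ∑ r' : Fin F,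
            (if t < c r then 1 else 0) * (if t < c r' then 1 else 0) :=
      fun r => Finset.sum_comm
    rw [Finset.sum_congr rfl (fun r _ => step2 r), Finset.sum_comm]
    refine Finset.sum_congr rfl fun t _ => ?_
    rw [hnt t]
    rw [← Finset.sum_mul_sum]
  -- sum of n t over range M is M
  have htot : ∑ t ∈ Finset.range M, n t = M := by
    have h0 : ∑ t ∈ Finset.range M, n t
        = ∑ r : Fin F, ∑ t ∈ Finset.range M, (if t < c r then 1 else 0) := by
      rw [← Finset.sum_comm]
      exact Finset.sum_congr rfl fun t _ => hnt t
    rw [h0]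
    have h1 : ∀ r : Fin F, ∑ t ∈ Finset.range M, (if t < c r then 1 else 0) = c r := by
      intro r
      rw [← Finset.card_filter]
      have : (Finset.range M).filter (fun t => t < c r) = Finset.range (c r) := by
        ext t
        simp only [Finset.mem_filter, Finset.mem_range]
        constructor
        · rintro ⟨_, h⟩; exact h
        · intro h; exact ⟨lt_of_lt_of_le h (hcM r), h⟩
      rw [this, Finset.card_range]
    rw [Finset.sum_congr rfl fun r _ => h1 r, hsum]
  -- squares + complements
  have hsq : ∑ t ∈ Finset.range M, n t * n t
      + ∑ t ∈ Finset.range M, n t * (F - n t) = M * F := by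
    rw [← Finset.sum_add_distrib]
    have h2 : ∀ t ∈ Finset.range M, n t * n t + n t * (F - n t) = n t * F := by
      intro t _
      rw [← Nat.mul_add]
      have := hnF t
      congr 1
      omega
    rw [Finset.sum_congr rfl h2, ← Finset.sum_mul, htot]
  -- fold
  obtain ⟨v, hvF, hmod, hineq⟩ := fold_lemma F n hnF M
  rw [htot] at hmod
  have hMmod : M % F = κ % F := by
    rw [hM, show m' * F + κ = F * m' + κ from by ring, Nat.mul_add_mod]
  have hlow : κ * (F - κ) ≤ ∑ t ∈ Finset.range M, n t * (F - n t) := by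
    rcases lt_or_eq_of_le hκF with hlt | heq
    · have hveq : v = κ := by
        rcases lt_or_eq_of_le hvF with h | h
        · rw [Nat.mod_eq_of_lt h] at hmod
          rw [← hmod, hMmod, Nat.mod_eq_of_lt hlt]
        · exfalso
          rw [h, Nat.mod_self] at hmod
          rw [hMmod, Nat.mod_eq_of_lt hlt] at hmod
          omega
      rw [← hveq]
      exact hineq
    · rw [← heq, Nat.sub_self, Nat.mul_zero]
      exact Nat.zero_le _
  -- remove the diagonal
  have hdiag : ∑ r : Fin F, ∑ r' : Fin F, (if r = r' then 0 else min (c r) (c r')) + M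
      = ∑ r : Fin F, ∑ r' : Fin F, min (c r) (c r') := by
    rw [← hsum, ← Finset.sum_add_distrib]
    refine Finset.sum_congr rfl fun r _ => ?_
    have h3 : ∀ r' : Fin F, min (c r) (c r')
        = (if r = r' then 0 else min (c r) (c r')) + (if r = r' then min (c r) (c r') else 0) := by
      intro r'
      by_cases h : r = r' <;> simp [h]
    rw [Finset.sum_congr rfl fun r' _ => h3 r', Finset.sum_add_distrib]
    congr 1
    rw [Finset.sum_ite_eq, if_pos (Finset.mem_univ r), min_self]
  -- final arithmetic
  have e1 : M * F = m' * F * (F-1) + m' * F + κ * F := by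
    rw [hM]
    have hFF : F * (F - 1) + F = F * F := by
      cases F with
      | zero => omega
      | succ f => simp [Nat.succ_sub_one]; ring
    have h4 : (m' * F + κ) * F = m' * (F * F) + κ * F := by ring
    rw [h4, ← hFF]
    ring
  have e2 : κ * (F - κ) + κ * (κ - 1) + κ = κ * F := by
    have h3 : (F - κ) + (κ - 1) + 1 = F := by omega
    calc κ * (F - κ) + κ * (κ - 1) + κ = κ * ((F - κ) + (κ - 1) + 1) := by ring
    _ = κ * F := by rw [h3]
  omega

lemma pda_lower (K F S m' κ : ℕ) (hF : 0 < F) (hκ : 0 < κ) (hκF : κ ≤ F)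
    (hK : K = m' * F + κ) (P : Fin F → Fin K → Option ℕ) (hP : IsPDA K F 1 S P) :
    m' * gsum F F + gsum F κ ≤ S := by
  classical
  obtain ⟨h1, h2, h3, h4⟩ := hP
  -- star function
  have hstar0 : ∀ j : Fin K, ∃ i : Fin F, ∀ i', P i' j = none ↔ i' = i := by
    intro j
    obtain ⟨i, hi⟩ := Finset.card_eq_one.mp (h1 j)
    refine ⟨i, fun i' => ?_⟩
    constructor
    · intro h
      have hm : i' ∈ Finset.univ.filter (fun i'' => P i'' j = none) :=
        Finset.mem_filter.mpr ⟨Finset.mem_univ _, h⟩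
      rw [hi] at hm
      simpa using hm
    · intro h'
      rw [h']
      have hm := Finset.mem_singleton_self i
      rw [← hi] at hm
      exact (Finset.mem_filter.mp hm).2
  choose star hstar using hstar0
  -- occurrence sets
  set Occ : ℕ → Finset (Fin F × Fin K) :=
    fun s => Finset.univ.filter (fun p => P p.1 p.2 = some s) with hOcc
  have hmem : ∀ (s : ℕ) (p : Fin F × Fin K), p ∈ Occ s ↔ P p.1 p.2 = some s := by
    intro s p
    rw [hOcc]
    simp
  have hpos : ∀ s < S, 1 ≤ (Occ s).card := by
    intro s hs
    obtain ⟨i, j, h⟩ := h3 s hs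
    exact Finset.card_pos.mpr ⟨(i, j), (hmem s (i,j)).mpr h⟩
  have hle2 : ∀ s, (Occ s).card ≤ 2 := by
    intro s
    by_contra hgt
    push_neg at hgt
    obtain ⟨a, b, c, ha, hb, hc, hab, hac, hbc⟩ := Finset.two_lt_card_iff.mp hgt
    rw [hmem] at ha hb hc
    have hdab : a.1 ≠ b.1 ∨ a.2 ≠ b.2 := by
      by_contra hcon
      push_neg at hcon
      exact hab (Prod.ext hcon.1 hcon.2)
    have hdac : a.1 ≠ c.1 ∨ a.2 ≠ c.2 := by
      by_contra hcon
      push_neg at hcon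
      exact hac (Prod.ext hcon.1 hcon.2)
    have hdbc : b.1 ≠ c.1 ∨ b.2 ≠ c.2 := by
      by_contra hcon
      push_neg at hcon
      exact hbc (Prod.ext hcon.1 hcon.2)
    obtain ⟨_, _, _, hBA⟩ := h4 a.1 a.2 b.1 b.2 s ha hb hdab
    obtain ⟨_, _, _, hCA⟩ := h4 a.1 a.2 c.1 c.2 s ha hc hdac
    obtain ⟨hBC1, _, _, _⟩ := h4 b.1 b.2 c.1 c.2 s hb hc hdbc
    exact hBC1 (((hstar a.2 b.1).mp hBA).trans ((hstar a.2 c.1).mp hCA).symm)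
  -- total count
  set NN : Finset (Fin F × Fin K) :=
    Finset.univ.filter (fun p => P p.1 p.2 ≠ none) with hNN
  have hNNcol : NN.card = K * (F - 1) := by
    have hfib := Finset.card_eq_sum_card_fiberwise
      (f := Prod.snd) (s := NN) (t := Finset.univ) (fun p _ => Finset.mem_univ _)
    rw [hfib]
    have hcol : ∀ j : Fin K, (NN.filter (fun p => p.2 = j)).card = F - 1 := by
      intro j
      have himg : NN.filter (fun p => p.2 = j)
          = (Finset.univ.filter (fun i : Fin F => ¬ P i j = none)).image (fun i => (i, j)) := by
        ext p
        simp only [hNN, Finset.mem_filter, Finset.mem_image, Finset.mem_univ, true_and]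
        constructor
        · rintro ⟨hne, rfl⟩
          exact ⟨p.1, hne, rfl⟩
        · rintro ⟨i, hne, rfl⟩
          exact ⟨hne, rfl⟩
      rw [himg, Finset.card_image_of_injective _ (fun i i' h => (Prod.mk.inj h).1)]
      have hsplit := Finset.card_filter_add_card_filter_not
        (s := (Finset.univ : Finset (Fin F))) (p := fun i => P i j = none)
      have hcu : (Finset.univ : Finset (Fin F)).card = F := by simp
      have := h1 j
      omega
    rw [Finset.sum_congr rfl (fun j _ => hcol j)]
    simp [Finset.sum_const, mul_comm]
  have htotal : ∑ s ∈ Finset.range S, (Occ s).card = K * (F - 1) := by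
    rw [← hNNcol]
    have hmapsto : ∀ p ∈ NN, (P p.1 p.2).getD 0 ∈ Finset.range S := by
      intro p hp
      rw [hNN, Finset.mem_filter] at hp
      obtain ⟨s, hs⟩ := Option.ne_none_iff_exists'.mp hp.2
      rw [hs]
      exact Finset.mem_range.mpr (h2 _ _ _ hs)
    rw [Finset.card_eq_sum_card_fiberwise hmapsto]
    refine (Finset.sum_congr rfl fun s _ => ?_).symm
    congr 1
    ext p
    simp only [hNN, hOcc, Finset.mem_filter, Finset.mem_univ, true_and]
    constructor
    · rintro ⟨hne, hg⟩
      obtain ⟨u, hu⟩ := Option.ne_none_iff_exists'.mp hne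
      rw [hu] at hg ⊢
      simpa using hg
    · intro h
      rw [h]
      exact ⟨by simp, rfl⟩
  -- doubles
  set Dset : Finset ℕ := (Finset.range S).filter (fun s => 2 ≤ (Occ s).card) with hDset
  have hSD : ∑ s ∈ Finset.range S, (Occ s).card = S + Dset.card := by
    have hpt : ∀ s ∈ Finset.range S,
        (Occ s).card = 1 + if 2 ≤ (Occ s).card then 1 else 0 := by
      intro s hs
      have ha1 := hpos s (Finset.mem_range.mp hs)
      have ha2 := hle2 s
      split_ifs <;> omega
    rw [Finset.sum_congr rfl hpt, Finset.sum_add_distrib, ← Finset.card_filter]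
    simp [hDset]
  -- doubled positions
  set O₂ : Finset (Fin F × Fin K) :=
    Finset.univ.filter (fun p => ∃ s, P p.1 p.2 = some s ∧ 2 ≤ (Occ s).card) with hO₂
  have hO2card : O₂.card = 2 * Dset.card := by
    have hmapsto : ∀ p ∈ O₂, (P p.1 p.2).getD 0 ∈ Dset := by
      intro p hp
      rw [hO₂, Finset.mem_filter] at hp
      obtain ⟨s, hs, h2s⟩ := hp.2
      rw [hs]
      simp only [hDset, Finset.mem_filter, Finset.mem_range]
      exact ⟨h2 _ _ _ hs, h2s⟩
    rw [Finset.card_eq_sum_card_fiberwise hmapsto]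
    have hfib : ∀ s ∈ Dset, (O₂.filter (fun p => (P p.1 p.2).getD 0 = s)).card = 2 := by
      intro s hs
      rw [hDset, Finset.mem_filter] at hs
      have heq : O₂.filter (fun p => (P p.1 p.2).getD 0 = s) = Occ s := by
        ext p
        simp only [hO₂, hOcc, Finset.mem_filter, Finset.mem_univ, true_and]
        constructor
        · rintro ⟨⟨u, hu, h2u⟩, hg⟩
          rw [hu] at hg ⊢
          simpa using hg
        · intro h
          rw [h]
          exact ⟨⟨s, rfl, hs.2⟩, rfl⟩
      rw [heq]
      exact le_antisymm (hle2 s) hs.2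
    rw [Finset.sum_congr rfl hfib, Finset.sum_const, smul_eq_mul, mul_comm]
  -- partner function
  have hpart0 : ∀ p : Fin F × Fin K, p ∈ O₂ → ∃ q : Fin F × Fin K,
      q ∈ O₂ ∧ P q.1 q.2 = P p.1 p.2 ∧ q.1 = star p.2 ∧ p.1 = star q.2 := by
    intro p hp
    rw [hO₂, Finset.mem_filter] at hp
    obtain ⟨s, hs, h2s⟩ := hp.2
    obtain ⟨q, hq, hqp⟩ := Finset.exists_mem_ne (s := Occ s) (by omega) p
    rw [hmem] at hq
    have hd : q.1 ≠ p.1 ∨ q.2 ≠ p.2 := by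
      by_contra hcon
      push_neg at hcon
      exact hqp (Prod.ext hcon.1 hcon.2)
    obtain ⟨_, _, hQP, hPQ⟩ := h4 q.1 q.2 p.1 p.2 s hq hs hd
    refine ⟨q, ?_, by rw [hq, hs], (hstar p.2 q.1).mp hQP, (hstar q.2 p.1).mp hPQ⟩
    rw [hO₂, Finset.mem_filter]
    exact ⟨Finset.mem_univ _, s, hq, h2s⟩
  choose part hpart using hpart0
  -- class sizes
  set cc : Fin F → ℕ := fun r => (Finset.univ.filter (fun j : Fin K => star j = r)).card with hcc
  have hcsum : ∑ r, cc r = K := by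
    have hfib := Finset.card_eq_sum_card_fiberwise
      (f := star) (s := Finset.univ) (t := Finset.univ) (fun j _ => Finset.mem_univ _)
    rw [← hfib]
    simp
  -- fiber bound
  have hO2sum := Finset.card_eq_sum_card_fiberwise
    (f := fun p : Fin F × Fin K => (p.1, star p.2)) (s := O₂) (t := Finset.univ)
    (fun p _ => Finset.mem_univ _)
  have hfbound : ∀ q : Fin F × Fin F,
      (O₂.filter (fun p => (p.1, star p.2) = q)).card
        ≤ if q.1 = q.2 then 0 else min (cc q.1) (cc q.2) := by
    intro q
    obtain ⟨a, b⟩ := q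
    simp only []
    split_ifs with hab
    · -- diagonal: empty
      subst hab
      rw [Finset.card_eq_zero.mpr]
      ext p
      simp only [Finset.mem_filter, Finset.notMem_empty, iff_false, not_and]
      intro hp
      rw [hO₂, Finset.mem_filter] at hp
      obtain ⟨s, hs, _⟩ := hp.2
      intro hq
      have h1' := (Prod.mk.inj hq).1
      have h2' := (Prod.mk.inj hq).2
      have : P p.1 p.2 = none := (hstar p.2 p.1).mpr (by rw [h1', h2'])
      rw [this] at hs
      exact nomatch hs
    · refine le_min ?_ ?_
      · -- ≤ cc a via partner injection
        apply Finset.card_le_card_of_injOn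
          (fun p => if h : p ∈ O₂ then (part p h).2 else p.2)
        · intro p hp
          rw [Finset.mem_coe, Finset.mem_filter] at hp
          obtain ⟨hpO, hpq⟩ := hp
          beta_reduce
          rw [dif_pos hpO]
          obtain ⟨hqO, hqval, hq1, hq2⟩ := hpart p hpO
          simp only [Finset.mem_coe, Finset.mem_filter, Finset.mem_univ, true_and]
          rw [← hq2]
          exact (Prod.mk.inj hpq).1
        · intro p hp p' hp' heq
          simp only [Finset.coe_filter, Set.mem_setOf_eq] at hp hp'
          obtain ⟨hpO, hpq⟩ := hp
          obtain ⟨hp'O, hp'q⟩ := hp'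
          replace heq : (if h : p ∈ O₂ then (part p h).2 else p.2)
              = (if h : p' ∈ O₂ then (part p' h).2 else p'.2) := heq
          rw [dif_pos hpO, dif_pos hp'O] at heq
          obtain ⟨hqO, hqval, hq1, hq2⟩ := hpart p hpO
          obtain ⟨hq'O, hq'val, hq'1, hq'2⟩ := hpart p' hp'O
          -- the partners coincide
          have hqq : part p hpO = part p' hp'O := by
            apply Prod.ext _ heq
            rw [hq1, hq'1, (Prod.mk.inj hpq).2, (Prod.mk.inj hp'q).2]
          -- same value
          have hpE := hpO
          have hp'E := hp'O
          rw [hO₂, Finset.mem_filter] at hpE hp'E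
          obtain ⟨s, hs, h2s⟩ := hpE.2
          obtain ⟨s', hs', h2s'⟩ := hp'E.2
          have hss : s = s' := by
            have e1 : P (part p hpO).1 (part p hpO).2 = some s := by rw [hqval, hs]
            have e2 : P (part p' hp'O).1 (part p' hp'O).2 = some s' := by rw [hq'val, hs']
            rw [hqq] at e1
            rw [e1] at e2
            exact Option.some.inj e2
          subst hss
          by_contra hne
          have hd : p.1 ≠ p'.1 ∨ p.2 ≠ p'.2 := by
            by_contra hcon
            push_neg at hcon
            exact hne (Prod.ext hcon.1 hcon.2)
          obtain ⟨hd1, _, _, _⟩ := h4 p.1 p.2 p'.1 p'.2 s hs hs' hd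
          exact hd1 (by rw [(Prod.mk.inj hpq).1, (Prod.mk.inj hp'q).1])
      · -- ≤ cc b via column injection
        apply Finset.card_le_card_of_injOn Prod.snd
        · intro p hp
          rw [Finset.mem_coe, Finset.mem_filter] at hp
          simp only [Finset.mem_coe, Finset.mem_filter, Finset.mem_univ, true_and]
          exact (Prod.mk.inj hp.2).2
        · intro p hp p' hp' heq
          simp only [Finset.coe_filter, Set.mem_setOf_eq] at hp hp'
          exact Prod.ext (((Prod.mk.inj hp.2).1).trans ((Prod.mk.inj hp'.2).1).symm) heq
  -- assemble
  have hO2le : O₂.card ≤ m' * F * (F-1) + κ * (κ-1) := by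
    rw [hO2sum]
    calc ∑ q : Fin F × Fin F, (O₂.filter (fun p => (p.1, star p.2) = q)).card
        ≤ ∑ q : Fin F × Fin F, (if q.1 = q.2 then 0 else min (cc q.1) (cc q.2)) :=
          Finset.sum_le_sum (fun q _ => hfbound q)
      _ = ∑ r : Fin F, ∑ r' : Fin F, (if r = r' then 0 else min (cc r) (cc r')) :=
          Fintype.sum_prod_type _
      _ ≤ m' * F * (F-1) + κ * (κ-1) :=
          minsum_bound F m' κ hF hκ hκF cc (by rw [hcsum, hK])
  -- final arithmetic
  have p1 : 2 * gsum F F = F * (F - 1) := by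
    rw [gsum_all]
    exact two_mul_choose_two F
  have p2 : 2 * gsum F κ + (F - κ) * ((F - κ) - 1) = F * (F - 1) := by
    have := gsum_tail F κ hκF
    have h2a := two_mul_choose_two (F - κ)
    have h2b := two_mul_choose_two F
    omega
  have p3 : K * (F - 1) = m' * F * (F - 1) + κ * (F - 1) := by
    rw [hK, Nat.add_mul]
  have p4 : 2 * (κ * (F - 1)) + (F - κ) * ((F - κ) - 1) = κ * (κ - 1) + F * (F - 1) := by
    obtain ⟨d, rfl⟩ : ∃ d, F = κ + d := ⟨F - κ, by omega⟩
    cases d with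
    | zero => simp [Nat.mul_comm]; ring
    | succ e =>
      have e1 : κ + (e+1) - κ = e + 1 := by omega
      have e2 : κ + (e+1) - 1 = κ + e := by omega
      have e3 : (e+1) - 1 = e := by omega
      rw [e1, e2, e3]
      zify [hκ]
      ring
  have p5 : 2 * (m' * gsum F F) = m' * F * (F - 1) := by
    calc 2 * (m' * gsum F F) = m' * (2 * gsum F F) := by ring
    _ = m' * (F * (F - 1)) := by rw [p1]
    _ = m' * F * (F - 1) := by ring
  omega

/-- `minS K F Z` is the minimum `S` for which a `(K, F, Z, S)` PDA exists. -/
noncomputable def minS (K F Z : ℕ) : ℕ :=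
  sInf {S | ∃ P : Fin F → Fin K → Option ℕ, IsPDA K F Z S P}

/-- for K = (m−1)F + κ with m ≥ 1 and 0 < κ ≤ F,
S(K, F, 1) = m·C(F,2) − C(F−κ,2). -/
theorem stmt17 (K F m κ : ℕ) (hF : 0 < F) (hm : 1 ≤ m) (hκ : 0 < κ) (hκF : κ ≤ F)
    (hK : K = (m - 1) * F + κ) :
    minS K F 1 = m * Nat.choose F 2 - Nat.choose (F - κ) 2 := by
  obtain ⟨m', rfl⟩ : ∃ m', m = m' + 1 := ⟨m - 1, by omega⟩
  have hK' : K = m' * F + κ := by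
    simpa using hK
  have target_eq : m' * gsum F F + gsum F κ
      = (m' + 1) * Nat.choose F 2 - Nat.choose (F - κ) 2 := by
    rw [gsum_all]
    have h1 := gsum_tail F κ hκF
    have h3 : (m' + 1) * Nat.choose F 2 = m' * Nat.choose F 2 + Nat.choose F 2 := by ring
    omega
  have hmem : (m' * gsum F F + gsum F κ)
      ∈ {S | ∃ P : Fin F → Fin K → Option ℕ, IsPDA K F 1 S P} :=
    ⟨pdaP K F, pdaP_isPDA K F m' κ hF hκ hκF hK'⟩
  apply le_antisymm
  · rw [← target_eq]
    exact Nat.sInf_le hmem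
  · rw [← target_eq]
    apply le_csInf ⟨_, hmem⟩
    rintro S ⟨P, hP⟩
    exact pda_lower K F S m' κ hF hκ hκF hK' P hP
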